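/- Any pair (v, w) feasible for the continuous-time dual LP satisfies v(x) ≥ 0 and w(x) ≥ 1 for every x in the maximum controlled invariant set X_I. -/

import Mathlib

open MeasureTheory

/-- An admissible trajectory of the convexified inclusion
`ẋ(t) ∈ conv f(x(t), U)`, `x(t) ∈ X`, on `[0, ∞)`. -/
def IsAdmissible {n m : ℕ} (X : Set (EuclideanSpace ℝ (Fin n)))
    (U : Set (EuclideanSpace ℝ (Fin m)))
    (f : EuclideanSpace ℝ (Fin n) → EuclideanSpace ℝ (Fin m) → EuclideanSpace ℝ (Fin n))
    (x : ℝ → EuclideanSpace ℝ (Fin n)) : Prop :=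
  (∀ t, 0 ≤ t → x t ∈ X) ∧
  ∃ d : ℝ → EuclideanSpace ℝ (Fin n),
    (∀ t, 0 ≤ t → IntervalIntegrable d volume 0 t) ∧
    (∀ t, 0 ≤ t → x t = x 0 + ∫ s in (0:ℝ)..t, d s) ∧
    (∀ᵐ t ∂(volume.restrict (Set.Ici (0:ℝ))), d t ∈ convexHull ℝ ((f (x t)) '' U))

/-- The maximum controlled invariant set of the continuous-time relaxed system. -/
def mciC {n m : ℕ} (X : Set (EuclideanSpace ℝ (Fin n))) (U : Set (EuclideanSpace ℝ (Fin m)))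
    (f : EuclideanSpace ℝ (Fin n) → EuclideanSpace ℝ (Fin m) → EuclideanSpace ℝ (Fin n)) :
    Set (EuclideanSpace ℝ (Fin n)) :=
  {x0 | ∃ x : ℝ → EuclideanSpace ℝ (Fin n), IsAdmissible X U f x ∧ x 0 = x0}

/-- Feasibility of a pair `(v, w)` (with `v` continuously differentiable and `w` continuous)
for the continuous-time dual LP: `∇v(x)·f(x,u) ≤ β v(x)` on `X × U`, `w ≥ v + 1` on `X`
and `w ≥ 0` on `X`. -/
def DualFeasC {n m : ℕ} (X : Set (EuclideanSpace ℝ (Fin n)))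
    (U : Set (EuclideanSpace ℝ (Fin m)))
    (f : EuclideanSpace ℝ (Fin n) → EuclideanSpace ℝ (Fin m) → EuclideanSpace ℝ (Fin n))
    (β : ℝ) (v w : EuclideanSpace ℝ (Fin n) → ℝ) : Prop :=
  ContDiff ℝ 1 v ∧ Continuous w ∧
  (∀ x ∈ X, ∀ u ∈ U, fderiv ℝ v x (f x u) ≤ β * v x) ∧
  (∀ x ∈ X, v x + 1 ≤ w x) ∧
  (∀ x ∈ X, 0 ≤ w x)

set_option maxHeartbeats 2000000 in
theorem continuous_dual_feasible_nonneg_on_MCI {n m : ℕ}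
    (X : Set (EuclideanSpace ℝ (Fin n))) (U : Set (EuclideanSpace ℝ (Fin m)))
    (hX : IsCompact X) (hU : IsCompact U)
    (f : EuclideanSpace ℝ (Fin n) → EuclideanSpace ℝ (Fin m) → EuclideanSpace ℝ (Fin n))
    (hf : Continuous fun p : EuclideanSpace ℝ (Fin n) × EuclideanSpace ℝ (Fin m) => f p.1 p.2)
    (β : ℝ) (hβ : 0 < β)
    (v w : EuclideanSpace ℝ (Fin n) → ℝ)
    (hfeas : DualFeasC X U f β v w) :
    ∀ x ∈ mciC X U f, 0 ≤ v x ∧ 1 ≤ w x := by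
  classical
  obtain ⟨hv, hw, hlp, hvw, hw0⟩ := hfeas
  rintro x0 ⟨x, ⟨hxX, d, hdint, hxint, hdae⟩, rfl⟩
  have hx0X : x 0 ∈ X := hxX 0 le_rfl
  suffices h0 : 0 ≤ v (x 0) by
    refine ⟨h0, ?_⟩
    have := hvw _ hx0X
    linarith
  -- notation
  have hvdiff : Differentiable ℝ v := hv.differentiable one_ne_zero
  have hvcont : Continuous v := hvdiff.continuous
  set Φ : EuclideanSpace ℝ (Fin n) → (EuclideanSpace ℝ (Fin n) →L[ℝ] ℝ) := fderiv ℝ v with hΦdef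
  have hΦcont : Continuous Φ := hv.continuous_fderiv one_ne_zero
  -- a bound `R` for the convex hull of the image of `f`
  obtain ⟨R, hRbound⟩ : ∃ R, ∀ y ∈ convexHull ℝ (Set.image2 f X U), ‖y‖ ≤ R := by
    have hb : Bornology.IsBounded (convexHull ℝ (Set.image2 f X U)) := by
      rw [isBounded_convexHull]
      have : Set.image2 f X U = (fun p : EuclideanSpace ℝ (Fin n) × EuclideanSpace ℝ (Fin m) => f p.1 p.2) '' (X ×ˢ U) :=
        (Set.image_prod _).symm
      rw [this]
      exact ((hX.prod hU).image hf).isBounded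
    exact isBounded_iff_forall_norm_le.1 hb
  obtain ⟨R, hR0, hRbound⟩ : ∃ R, 0 < R ∧ ∀ y ∈ convexHull ℝ (Set.image2 f X U), ‖y‖ ≤ R :=
    ⟨max R 1, lt_of_lt_of_le one_pos (le_max_right _ _),
      fun y hy => (hRbound y hy).trans (le_max_left _ _)⟩
  -- the convex hulls along the trajectory are inside this hull
  have hhull_sub : ∀ z ∈ X, convexHull ℝ (f z '' U) ⊆ convexHull ℝ (Set.image2 f X U) := by
    intro z hz
    apply convexHull_mono
    rintro y ⟨u, hu, rfl⟩
    exact Set.mem_image2_of_mem hz hu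
  -- trajectory increments
  have hxsub : ∀ s t : ℝ, 0 ≤ s → s ≤ t → x t - x s = ∫ τ in s..t, d τ := by
    intro s t hs hst
    have h1 := hxint s hs
    have h2 := hxint t (hs.trans hst)
    rw [h1, h2, add_sub_add_left_eq_sub]
    rw [intervalIntegral.integral_interval_sub_left (hdint t (hs.trans hst)) (hdint s hs)]
  have hdint' : ∀ s t : ℝ, 0 ≤ s → s ≤ t → IntervalIntegrable d volume s t := by
    intro s t hs hst
    refine (hdint t (hs.trans hst)).mono_set ?_
    rw [Set.uIcc_of_le hst, Set.uIcc_of_le (hs.trans hst)]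
    exact Set.Icc_subset_Icc hs le_rfl
  -- the a.e. membership, in plain form
  have hdae' : ∀ᵐ τ, 0 ≤ τ → d τ ∈ convexHull ℝ (f (x τ) '' U) := by
    have := (ae_restrict_iff' measurableSet_Ici).1 hdae
    filter_upwards [this] with τ hτ h0τ
    exact hτ h0τ
  have hdbound : ∀ᵐ τ, 0 ≤ τ → ‖d τ‖ ≤ R := by
    filter_upwards [hdae'] with τ hτ h0τ
    exact hRbound _ (hhull_sub _ (hxX τ h0τ) (hτ h0τ))
  -- Lipschitz bound for the trajectory
  have hxlip : ∀ s t : ℝ, 0 ≤ s → s ≤ t → ‖x t - x s‖ ≤ R * (t - s) := by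
    intro s t hs hst
    rw [hxsub s t hs hst]
    have := intervalIntegral.norm_integral_le_of_norm_le_const_ae
      (C := R) (a := s) (b := t) (f := d) ?_
    · rwa [abs_of_nonneg (by linarith)] at this
    · filter_upwards [hdbound] with τ hτ hmem
      rw [Set.uIoc_of_le hst] at hmem
      exact hτ (hs.trans hmem.1.le)
  -- the modified (everywhere-defined continuous) trajectory
  set y : ℝ → EuclideanSpace ℝ (Fin n) := fun s => x (max s 0) with hydef
  have hyx : ∀ s : ℝ, 0 ≤ s → y s = x s := fun s hs => by
    simp only [hydef, max_eq_left hs]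
  have hyX : ∀ s : ℝ, y s ∈ X := fun s => hxX _ (le_max_right _ _)
  have hylip : LipschitzWith (Real.toNNReal R) y := by
    apply LipschitzWith.of_dist_le_mul
    intro a b
    rcases le_total a b with hab | hab
    · rw [dist_eq_norm, Real.coe_toNNReal _ hR0.le, norm_sub_rev]
      calc ‖x (max b 0) - x (max a 0)‖ ≤ R * (max b 0 - max a 0) :=
            hxlip _ _ (le_max_right _ _) (max_le_max_right 0 hab)
        _ ≤ R * dist a b := by
            rw [dist_comm, Real.dist_eq, abs_of_nonneg (by linarith)]
            have : max b 0 - max a 0 ≤ b - a := by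
              rcases le_total a 0 with h | h <;> rcases le_total b 0 with h' | h' <;>
                simp [max_eq_left, max_eq_right, h, h'] <;> linarith
            exact mul_le_mul_of_nonneg_left this hR0.le
    · rw [dist_eq_norm, Real.coe_toNNReal _ hR0.le]
      calc ‖x (max a 0) - x (max b 0)‖ ≤ R * (max a 0 - max b 0) :=
            hxlip _ _ (le_max_right _ _) (max_le_max_right 0 hab)
        _ ≤ R * dist a b := by
            rw [Real.dist_eq, abs_of_nonneg (by linarith)]
            have : max a 0 - max b 0 ≤ a - b := by
              rcases le_total a 0 with h | h <;> rcases le_total b 0 with h' | h' <;>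
                simp [max_eq_left, max_eq_right, h, h'] <;> linarith
            exact mul_le_mul_of_nonneg_left this hR0.le
  have hycont : Continuous y := hylip.continuous
  -- V and G
  set V : ℝ → ℝ := fun s => v (y s) with hVdef
  have hVcont : Continuous V := hvcont.comp hycont
  set G : ℝ → ℝ := fun u => ∫ τ in (0:ℝ)..u, β * V τ with hGdef
  have hGVint : ∀ a b : ℝ, IntervalIntegrable (fun τ => β * V τ) volume a b :=
    fun a b => (continuous_const.mul hVcont).intervalIntegrable a b
  have hGderiv : ∀ u : ℝ, HasDerivAt G (β * V u) u := by
    intro u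
    exact intervalIntegral.integral_hasDerivAt_right (hGVint 0 u)
      ((continuous_const.mul hVcont).stronglyMeasurableAtFilter _ _)
      (continuous_const.mul hVcont).continuousAt
  have hGcont : Continuous G := by
    have : Differentiable ℝ G := fun u => (hGderiv u).differentiableAt
    exact this.continuous
  have hG0 : G 0 = 0 := intervalIntegral.integral_same
  -- compact convex set containing X
  obtain ⟨ρ, hXρ⟩ : ∃ ρ, X ⊆ Metric.closedBall 0 ρ :=
    hX.isBounded.subset_closedBall 0
  have hXc : IsCompact (Metric.closedBall (0:EuclideanSpace ℝ (Fin n)) ρ) := isCompact_closedBall 0 ρ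
  have hXcconv : Convex ℝ (Metric.closedBall (0:EuclideanSpace ℝ (Fin n)) ρ) := convex_closedBall 0 ρ
  -- MAIN integral inequality
  have main : ∀ t : ℝ, 0 ≤ t → V t ≤ V 0 + G t := by
    intro t ht
    rcases eq_or_lt_of_le ht with rfl | htpos
    · simp [hG0]
    refine le_of_forall_pos_le_add ?_
    intro ε' hε'
    have hden : (0:ℝ) < 2 * R * t + 1 := by nlinarith
    set ε : ℝ := ε' / (2 * R * t + 1) with hεdef
    have hε : 0 < ε := div_pos hε' hden
    -- uniform continuity of the gradient on the closed ball
    obtain ⟨δ, hδ0, hδ⟩ : ∃ δ > 0, ∀ a ∈ Metric.closedBall (0:EuclideanSpace ℝ (Fin n)) ρ,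
        ∀ b ∈ Metric.closedBall (0:EuclideanSpace ℝ (Fin n)) ρ,
        dist a b ≤ δ → ‖Φ a - Φ b‖ ≤ ε := by
      have huc := hXc.uniformContinuousOn_of_continuous hΦcont.continuousOn
      rw [Metric.uniformContinuousOn_iff_le] at huc
      obtain ⟨δ, hδ0, H⟩ := huc ε hε
      exact ⟨δ, hδ0, fun a ha b hb hab => by
        have := H a ha b hb hab
        rwa [dist_eq_norm] at this⟩
    -- the key pointwise (in `s`) inequality, for small `h`
    have key : ∀ h : ℝ, 0 < h → h ≤ δ / R → ∀ s : ℝ, 0 ≤ s →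
        V (s + h) - V s ≤ (G (s + h) - G s) + 2 * ε * R * h := by
      intro h hh0 hhδ s hs
      have hsh : (0:ℝ) ≤ s + h := by linarith
      have hamem : x s ∈ X := hxX _ hs
      have hbmem : x (s + h) ∈ X := hxX _ hsh
      set a : EuclideanSpace ℝ (Fin n) := x s with hadef
      set b : EuclideanSpace ℝ (Fin n) := x (s + h) with hbdef
      set ℓ : EuclideanSpace ℝ (Fin n) →L[ℝ] ℝ := Φ a with hℓdef
      have hRh : ‖b - a‖ ≤ R * h := by
        have := hxlip s (s + h) hs (by linarith)
        simpa using this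
      have hRhδ : R * h ≤ δ := by
        rw [mul_comm]
        exact (le_div_iff₀ hR0).1 hhδ
      have seg_sub : segment ℝ a b ⊆ Metric.closedBall 0 ρ :=
        hXcconv.segment_subset (hXρ hamem) (hXρ hbmem)
      -- (i) mean value estimate
      have key1 : v b - v a - ℓ (b - a) ≤ ε * (R * h) := by
        have bound : ∀ ξ ∈ segment ℝ a b, ‖Φ ξ - ℓ‖ ≤ ε := by
          intro ξ hξ
          apply hδ ξ (seg_sub hξ) a (hXρ hamem)
          have hball : ξ ∈ Metric.closedBall a (dist a b) :=
            (convex_closedBall a (dist a b)).segment_subset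
              (Metric.mem_closedBall_self dist_nonneg)
              (Metric.mem_closedBall.2 (by rw [dist_comm])) hξ
          rw [Metric.mem_closedBall] at hball
          refine hball.trans ?_
          rw [dist_eq_norm, norm_sub_rev]
          exact hRh.trans hRhδ
        have hmvt := (convex_segment a b).norm_image_sub_le_of_norm_hasFDerivWithin_le'
          (f := v) (f' := Φ) (φ := ℓ) (C := ε)
          (fun ξ _ => (hvdiff ξ).hasFDerivAt.hasFDerivWithinAt) bound
          (left_mem_segment ℝ a b) (right_mem_segment ℝ a b)
        have habs : v b - v a - ℓ (b - a) ≤ ε * ‖b - a‖ := by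
          refine le_trans (le_abs_self _) ?_
          rw [← Real.norm_eq_abs]
          exact hmvt
        exact habs.trans (mul_le_mul_of_nonneg_left hRh hε.le)
      -- (ii) the linear term as an integral
      have hdsh : IntervalIntegrable d volume s (s + h) := hdint' s (s + h) hs (by linarith)
      have hℓint : ℓ (b - a) = ∫ τ in s..s + h, ℓ (d τ) := by
        rw [show b - a = ∫ τ in s..s + h, d τ from hxsub s (s + h) hs (by linarith)]
        exact (ContinuousLinearMap.intervalIntegral_comp_comm ℓ hdsh).symm
      have hℓd_int : IntervalIntegrable (fun τ => ℓ (d τ)) volume s (s + h) :=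
        ⟨ℓ.integrable_comp hdsh.1, ℓ.integrable_comp hdsh.2⟩
      have hrhs_int : IntervalIntegrable (fun τ => β * V τ + ε * R) volume s (s + h) :=
        ((continuous_const.mul hVcont).add continuous_const).intervalIntegrable _ _
      -- (iii) a.e. comparison of integrands
      have hae : ∀ᵐ τ ∂volume.restrict (Set.Icc s (s + h)), ℓ (d τ) ≤ β * V τ + ε * R := by
        rw [ae_restrict_iff' measurableSet_Icc]
        filter_upwards [hdae', hdbound] with τ hτ hτb hmem
        have h0τ : 0 ≤ τ := hs.trans hmem.1
        have hVτ : V τ = v (x τ) := by simp only [hVdef]; rw [hyx τ h0τ]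
        have hhalf : Φ (x τ) (d τ) ≤ β * v (x τ) := by
          have hconv : Convex ℝ {z : EuclideanSpace ℝ (Fin n) | Φ (x τ) z ≤ β * v (x τ)} :=
            convex_halfSpace_le ⟨fun p q => map_add _ p q, fun c p => map_smul _ c p⟩ _
          have hsub : f (x τ) '' U ⊆ {z | Φ (x τ) z ≤ β * v (x τ)} := by
            rintro z ⟨u, hu, rfl⟩
            exact hlp (x τ) (hxX τ h0τ) u hu
          exact convexHull_min hsub hconv (hτ h0τ)
        have hdistΦ : ‖ℓ - Φ (x τ)‖ ≤ ε := by
          apply hδ a (hXρ hamem) (x τ) (hXρ (hxX τ h0τ))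
          rw [dist_eq_norm, norm_sub_rev]
          refine (hxlip s τ hs hmem.1).trans (le_trans ?_ hRhδ)
          exact mul_le_mul_of_nonneg_left (by linarith [hmem.2]) hR0.le
        have hdiff : ℓ (d τ) - Φ (x τ) (d τ) ≤ ε * R := by
          have h1 : ℓ (d τ) - Φ (x τ) (d τ) = (ℓ - Φ (x τ)) (d τ) := by simp
          rw [h1]
          calc (ℓ - Φ (x τ)) (d τ) ≤ ‖(ℓ - Φ (x τ)) (d τ)‖ := le_abs_self _
            _ ≤ ‖ℓ - Φ (x τ)‖ * ‖d τ‖ := ContinuousLinearMap.le_opNorm _ _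
            _ ≤ ε * R := mul_le_mul hdistΦ (hτb h0τ) (norm_nonneg _) hε.le
        rw [hVτ]
        linarith
      -- (iv) integrate
      have hint_le : (∫ τ in s..s + h, ℓ (d τ)) ≤ ∫ τ in s..s + h, (β * V τ + ε * R) :=
        intervalIntegral.integral_mono_ae_restrict (by linarith) hℓd_int hrhs_int hae
      have hrhs_val : (∫ τ in s..s + h, (β * V τ + ε * R)) = (G (s + h) - G s) + ε * R * h := by
        have hcst : IntervalIntegrable (fun _ : ℝ => ε * R) volume s (s + h) :=
          intervalIntegrable_const
        rw [intervalIntegral.integral_add (hGVint s (s + h)) hcst,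
          intervalIntegral.integral_const]
        have hGsplit : (∫ τ in s..s + h, β * V τ) = G (s + h) - G s := by
          have hadd := intervalIntegral.integral_add_adjacent_intervals
            (hGVint 0 s) (hGVint s (s + h))
          simp only [hGdef]
          linarith
        rw [hGsplit]
        have : (s + h - s) • (ε * R) = ε * R * h := by
          rw [smul_eq_mul]; ring
        rw [this]
      have hVs : V s = v a := by simp only [hVdef]; rw [hadef, hyx s hs]
      have hVsh : V (s + h) = v b := by simp only [hVdef]; rw [hbdef, hyx _ hsh]
      have hchain : ℓ (b - a) ≤ (G (s + h) - G s) + ε * R * h := by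
        rw [hℓint]; rw [← hrhs_val]; exact hint_le
      rw [hVs, hVsh]
      have hring : ε * (R * h) = ε * R * h := by ring
      linarith [key1, hchain, hring]
    -- integrate the key inequality over `s ∈ [0, t]`
    set HV : ℝ → ℝ := fun u => ∫ τ in (0:ℝ)..u, V τ with hHVdef
    set GG : ℝ → ℝ := fun u => ∫ τ in (0:ℝ)..u, G τ with hGGdef
    have hHVderiv : ∀ u : ℝ, HasDerivAt HV (V u) u := fun u =>
      intervalIntegral.integral_hasDerivAt_right (hVcont.intervalIntegrable 0 u)
        (hVcont.stronglyMeasurableAtFilter _ _) hVcont.continuousAt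
    have hGGderiv : ∀ u : ℝ, HasDerivAt GG (G u) u := fun u =>
      intervalIntegral.integral_hasDerivAt_right (hGcont.intervalIntegrable 0 u)
        (hGcont.stronglyMeasurableAtFilter _ _) hGcont.continuousAt
    have hHV0 : HV 0 = 0 := intervalIntegral.integral_same
    have hGG0 : GG 0 = 0 := intervalIntegral.integral_same
    have hP : ∀ h : ℝ, 0 < h → h ≤ δ / R →
        ((HV (t + h) - HV t) - HV h) ≤ ((GG (t + h) - GG t) - GG h) + 2 * ε * R * h * t := by
      intro h hh0 hhδ
      have hVtrans : (∫ s in (0:ℝ)..t, V (s + h)) = HV (t + h) - HV h := by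
        rw [intervalIntegral.integral_comp_add_right (fun u => V u) h, zero_add]
        have := intervalIntegral.integral_add_adjacent_intervals
          (hVcont.intervalIntegrable (μ := volume) 0 h)
          (hVcont.intervalIntegrable (μ := volume) h (t + h))
        simp only [hHVdef]
        linarith
      have hGtrans : (∫ s in (0:ℝ)..t, G (s + h)) = GG (t + h) - GG h := by
        rw [intervalIntegral.integral_comp_add_right (fun u => G u) h, zero_add]
        have := intervalIntegral.integral_add_adjacent_intervals
          (hGcont.intervalIntegrable (μ := volume) 0 h)
          (hGcont.intervalIntegrable (μ := volume) h (t + h))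
        simp only [hGGdef]
        linarith
      have hVh_cont : Continuous (fun s : ℝ => V (s + h)) :=
        hVcont.comp (continuous_add_right h)
      have hGh_cont : Continuous (fun s : ℝ => G (s + h)) :=
        hGcont.comp (continuous_add_right h)
      have hVh_ii : IntervalIntegrable (fun s : ℝ => V (s + h)) volume 0 t :=
        hVh_cont.intervalIntegrable _ _
      have hGh_ii : IntervalIntegrable (fun s : ℝ => G (s + h)) volume 0 t :=
        hGh_cont.intervalIntegrable _ _
      have hlhs_int : IntervalIntegrable (fun s => V (s + h) - V s) volume 0 t :=
        (hVh_cont.sub hVcont).intervalIntegrable _ _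
      have hrhs_int : IntervalIntegrable
          (fun s => (G (s + h) - G s) + 2 * ε * R * h) volume 0 t :=
        ((hGh_cont.sub hGcont).add continuous_const).intervalIntegrable _ _
      have hcst2 : IntervalIntegrable (fun _ : ℝ => 2 * ε * R * h) volume 0 t :=
        intervalIntegrable_const
      have hmono := intervalIntegral.integral_mono_on ht hlhs_int hrhs_int
        (fun s hsmem => key h hh0 hhδ s hsmem.1)
      rw [intervalIntegral.integral_sub hVh_ii (hVcont.intervalIntegrable _ _),
        intervalIntegral.integral_add (show IntervalIntegrable (fun s => G (s + h) - G s) volume 0 t from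
          (hGh_cont.sub hGcont).intervalIntegrable _ _) hcst2,
        intervalIntegral.integral_sub hGh_ii (hGcont.intervalIntegrable _ _),
        intervalIntegral.integral_const] at hmono
      have e1 : (∫ s in (0:ℝ)..t, V (s + h)) = HV (t + h) - HV h := hVtrans
      have e2 : (∫ s in (0:ℝ)..t, G (s + h)) = GG (t + h) - GG h := hGtrans
      have e3 : (∫ s in (0:ℝ)..t, V s) = HV t := rfl
      have e4 : (∫ s in (0:ℝ)..t, G s) = GG t := rfl
      rw [e1, e2, e3, e4, smul_eq_mul] at hmono
      linarith
    -- take the limit `h → 0⁺`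
    have hslopeHV_t := (hHVderiv t).tendsto_slope_zero_right
    have hslopeHV_0 := (hHVderiv 0).tendsto_slope_zero_right
    have hslopeGG_t := (hGGderiv t).tendsto_slope_zero_right
    have hslopeGG_0 := (hGGderiv 0).tendsto_slope_zero_right
    have hLHS : Filter.Tendsto (fun h : ℝ => h⁻¹ * (((HV (t + h) - HV t) - HV h)))
        (nhdsWithin 0 (Set.Ioi 0)) (nhds (V t - V 0)) := by
      have := hslopeHV_t.sub hslopeHV_0
      simp only [smul_eq_mul, zero_add, hHV0, sub_zero] at this
      simpa [mul_sub] using this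
    have hRHS : Filter.Tendsto
        (fun h : ℝ => h⁻¹ * (((GG (t + h) - GG t) - GG h) + 2 * ε * R * h * t))
        (nhdsWithin 0 (Set.Ioi 0)) (nhds ((G t - G 0) + 2 * ε * R * t)) := by
      have h1 := hslopeGG_t.sub hslopeGG_0
      simp only [smul_eq_mul, zero_add, hGG0, sub_zero] at h1
      have h2 : Filter.Tendsto (fun h : ℝ => h⁻¹ * (2 * ε * R * h * t))
          (nhdsWithin 0 (Set.Ioi 0)) (nhds (2 * ε * R * t)) := by
        apply Filter.Tendsto.congr' _ tendsto_const_nhds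
        filter_upwards [self_mem_nhdsWithin] with h hh
        have hh0 : (h:ℝ) ≠ 0 := ne_of_gt hh
        field_simp
      have := h1.add h2
      simpa [mul_sub, mul_add] using this
    have hfinal : V t - V 0 ≤ (G t - G 0) + 2 * ε * R * t := by
      refine le_of_tendsto_of_tendsto hLHS hRHS ?_
      filter_upwards [Filter.inter_mem self_mem_nhdsWithin
        (nhdsWithin_le_nhds (Metric.ball_mem_nhds 0 (div_pos hδ0 hR0)))] with h hh
      obtain ⟨hh1, hh2⟩ := hh
      have hh0 : (0:ℝ) < h := hh1
      have hhδ : h ≤ δ / R := by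
        have := hh2
        rw [Metric.mem_ball, Real.dist_eq, sub_zero, abs_of_pos hh0] at this
        linarith
      have := hP h hh0 hhδ
      exact mul_le_mul_of_nonneg_left this (inv_nonneg.2 hh0.le)
    have hεeq : ε * (2 * R * t + 1) = ε' := div_mul_cancel₀ _ hden.ne'
    have h2εRt : 2 * ε * R * t ≤ ε' := by nlinarith [hε.le, hR0.le, htpos.le]
    rw [hG0] at hfinal
    linarith
  -- Gronwall step
  have gron : ∀ t : ℝ, 0 ≤ t → V t ≤ Real.exp (β * t) * V 0 := by
    intro t ht
    set F : ℝ → ℝ := fun u => Real.exp (-(β * u)) * (V 0 + G u) with hFdef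
    have hFderiv : ∀ u : ℝ, HasDerivAt F
        ((-β * Real.exp (-(β * u))) * (V 0 + G u) + Real.exp (-(β * u)) * (β * V u)) u := by
      intro u
      have h1 : HasDerivAt (fun u : ℝ => Real.exp (-(β * u))) (-β * Real.exp (-(β * u))) u := by
        have hinner : HasDerivAt (fun u : ℝ => -(β * u)) (-β) u := by
          simpa [Pi.neg_def] using ((hasDerivAt_id u).const_mul β).neg
        simpa [mul_comm, Function.comp_def] using (Real.hasDerivAt_exp (-(β * u))).comp u hinner
      have h2 : HasDerivAt (fun u : ℝ => V 0 + G u) (β * V u) u := (hGderiv u).const_add _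
      exact h1.mul h2
    have hFcont : Continuous F :=
      ((Real.continuous_exp.comp (continuous_const.mul continuous_id).neg)).mul
        (continuous_const.add hGcont)
    have hanti : AntitoneOn F (Set.Icc 0 t) := by
      apply antitoneOn_of_deriv_nonpos (convex_Icc 0 t) hFcont.continuousOn
      · intro u _
        exact ((hFderiv u).differentiableAt).differentiableWithinAt
      · intro u hu
        rw [interior_Icc] at hu
        rw [(hFderiv u).deriv]
        have hmain := main u hu.1.le
        have he : 0 < Real.exp (-(β * u)) := Real.exp_pos _
        nlinarith [mul_nonneg (mul_pos hβ he).le (sub_nonneg.2 hmain)]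
    have hFt : F t ≤ F 0 := hanti (Set.left_mem_Icc.2 ht) (Set.right_mem_Icc.2 ht) ht
    have hF0 : F 0 = V 0 := by simp [hFdef, hG0]
    rw [hF0] at hFt
    have h5 := mul_le_mul_of_nonneg_left hFt (Real.exp_nonneg (β * t))
    rw [hFdef] at h5
    simp only [] at h5
    rw [← mul_assoc, ← Real.exp_add, add_neg_cancel, Real.exp_zero, one_mul] at h5
    linarith [main t ht]
  -- conclusion
  obtain ⟨M, hM'⟩ : ∃ M, ∀ z ∈ v '' X, ‖z‖ ≤ M :=
    isBounded_iff_forall_norm_le.1 ((hX.image_of_continuousOn hvcont.continuousOn).isBounded)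
  have hM : ∀ z ∈ X, ‖v z‖ ≤ M := fun z hz => hM' _ (Set.mem_image_of_mem v hz)
  have hlow : ∀ t : ℝ, 0 ≤ t → -(M * Real.exp (-(β * t))) ≤ v (x 0) := by
    intro t ht
    have h1 : -M ≤ V t := by
      have := hM (y t) (hyX t)
      rw [Real.norm_eq_abs] at this
      linarith [abs_le.1 this |>.1]
    have h2 := gron t ht
    have h3 : -M ≤ Real.exp (β * t) * V 0 := le_trans h1 h2
    have hV0 : V 0 = v (x 0) := by simp only [hVdef]; rw [hyx 0 le_rfl]
    have h4 := mul_le_mul_of_nonneg_left h3 (Real.exp_nonneg (-(β * t)))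
    rw [← mul_assoc, ← Real.exp_add, neg_add_cancel, Real.exp_zero, one_mul] at h4
    rw [← hV0]
    nlinarith [h4]
  have htend : Filter.Tendsto (fun t : ℝ => -(M * Real.exp (-(β * t)))) Filter.atTop (nhds 0) := by
    rw [show (0:ℝ) = -(M * 0) by ring]
    apply Filter.Tendsto.neg
    apply Filter.Tendsto.const_mul
    apply Real.tendsto_exp_atBot.comp
    exact (Filter.tendsto_neg_atBot_iff.2 (Filter.Tendsto.const_mul_atTop hβ Filter.tendsto_id))
  exact le_of_tendsto htend (Filter.eventually_atTop.2 ⟨0, fun t ht => hlow t ht⟩)
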